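/- For all m ≥ 1, the 2-adic valuation of A_{1,m} equals ν₂(m(m+1)) + 1. -/

import Mathlib

open Finset

noncomputable def A (l m : ℕ) : ℚ :=
  ((l.factorial * m.factorial : ℕ) : ℚ) / 2 ^ (m - l) *
    ∑ k ∈ Finset.Icc l m,
      (2 : ℚ) ^ k * ((2 * m - 2 * k).choose (m - k)) * ((m + k).choose m) * (k.choose l)

open Nat in
/-- auxiliary term: `T m j = (2j-1)‼ * C(2m-j, m+1) * (m+1)!/j!` -/
def Tm (m j : ℕ) : ℕ :=
  (2 * j - 1)‼ * ((2 * m - j).choose (m + 1)) * ((m + 1).descFactorial (m + 1 - j))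

open Nat in
lemma odd_doubleFactorial_odd (j : ℕ) : ¬ 2 ∣ (2 * j + 1)‼ := by
  induction j with
  | zero => decide
  | succ n ih =>
      have h : 2 * (n + 1) + 1 = (2 * n + 1) + 2 := by ring
      rw [h, Nat.doubleFactorial_add_two]
      rintro hd
      rcases (Nat.Prime.dvd_mul Nat.prime_two).1 hd with h1 | h2
      · omega
      · exact ih h2

open Nat in
lemma odd_df (j : ℕ) : ¬ 2 ∣ (2 * j - 1)‼ := by
  cases j with
  | zero => decide
  | succ n =>
      have h : 2 * (n + 1) - 1 = 2 * n + 1 := by omega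
      rw [h]; exact odd_doubleFactorial_odd n

open Nat in
lemma factorial_two_mul_eq (a : ℕ) : (2 * a)! = 2 ^ a * a ! * ((2 * a - 1)‼) := by
  cases a with
  | zero => decide
  | succ n =>
      have h1 : 2 * (n + 1) = (2 * n + 1) + 1 := by ring
      have h2 : 2 * (n + 1) - 1 = 2 * n + 1 := by omega
      rw [h2, h1, Nat.factorial_eq_mul_doubleFactorial, ← h1, Nat.doubleFactorial_two_mul]

open Nat in
/-- per-term identity in ℚ, with m = a + b + 1, k = b + 1, j = a -/
lemma term_eq (a b : ℕ) :
    (((a + b + 1)! : ℚ)) / 2 ^ (a + b) *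
      ((2:ℚ) ^ (b + 1) * ((2 * a).choose a) * ((a + 2 * b + 2).choose (a + b + 1)) * (b + 1))
    = 2 * (Tm (a + b + 1) a : ℚ) := by
  have hc1 : (((2 * a).choose a : ℕ) : ℚ) = (2 * a)! / (a ! * a !) := by
    rw [Nat.cast_choose ℚ (by omega : a ≤ 2 * a), show 2 * a - a = a by omega]
  have hc2 : (((a + 2 * b + 2).choose (a + b + 1) : ℕ) : ℚ)
      = (a + 2 * b + 2)! / ((a + b + 1)! * (b + 1)!) := by
    rw [Nat.cast_choose ℚ (by omega : a + b + 1 ≤ a + 2 * b + 2),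
      show a + 2 * b + 2 - (a + b + 1) = b + 1 by omega]
  have hc3 : (((a + 2 * b + 2).choose (a + b + 2) : ℕ) : ℚ)
      = (a + 2 * b + 2)! / ((a + b + 2)! * b !) := by
    rw [Nat.cast_choose ℚ (by omega : a + b + 2 ≤ a + 2 * b + 2),
      show a + 2 * b + 2 - (a + b + 2) = b by omega]
  have hdf : (((a + b + 2).descFactorial (b + 2) : ℕ) : ℚ) = (a + b + 2)! / a ! := by
    rw [Nat.descFactorial_eq_div (by omega : b + 2 ≤ a + b + 2),
      show a + b + 2 - (b + 2) = a by omega,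
      Nat.cast_div (Nat.factorial_dvd_factorial (by omega))
        (by exact_mod_cast (Nat.factorial_pos a).ne')]
  have hddf : (((2 * a - 1)‼ : ℕ) : ℚ) = (2 * a)! / (2 ^ a * a !) := by
    have h2 : ((2 * a)! : ℚ) = 2 ^ a * a ! * ((2 * a - 1)‼ : ℕ) := by
      exact_mod_cast factorial_two_mul_eq a
    field_simp [h2]
    rw [h2]; ring
  have hT : (Tm (a + b + 1) a : ℚ)
      = ((2 * a - 1)‼ : ℕ) * (((a + 2 * b + 2).choose (a + b + 2) : ℕ))
        * (((a + b + 2).descFactorial (b + 2) : ℕ)) := by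
    unfold Tm
    rw [show 2 * (a + b + 1) - a = a + 2 * b + 2 by omega,
      show (a + b + 1) + 1 = a + b + 2 by omega,
      show (a + b + 1) + 1 - a = b + 2 by omega]
    push_cast
    ring
  rw [hT, hc1, hc2, hc3, hdf, hddf]
  have h1 : (a ! : ℚ) ≠ 0 := by exact_mod_cast (Nat.factorial_pos a).ne'
  have h2 : (b ! : ℚ) ≠ 0 := by exact_mod_cast (Nat.factorial_pos b).ne'
  have h3 : ((a + b + 1)! : ℚ) ≠ 0 := by exact_mod_cast (Nat.factorial_pos _).ne'
  have h4 : ((a + b + 2)! : ℚ) ≠ 0 := by exact_mod_cast (Nat.factorial_pos _).ne'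
  have h5 : ((b + 1)! : ℚ) ≠ 0 := by exact_mod_cast (Nat.factorial_pos _).ne'
  have hb1 : ((b + 1)! : ℚ) = (b + 1) * b ! := by
    exact_mod_cast Nat.factorial_succ b
  have hpow : (2 : ℚ) ^ (a + b) ≠ 0 := by positivity
  field_simp [hb1]
  simp only [Nat.factorial_succ, Nat.cast_mul, Nat.cast_add, Nat.cast_one]
  ring

open Nat in
/-- the sum identity -/
lemma A_eq (m : ℕ) (h : 1 ≤ m) :
    A 1 m = ((2 * ∑ j ∈ range m, Tm m j : ℕ) : ℚ) := by
  unfold A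
  push_cast
  rw [Finset.mul_sum, Finset.mul_sum]
  refine Finset.sum_nbij' (fun k => m - k) (fun j => m - j) ?_ ?_ ?_ ?_ ?_
  · intro k hk; simp only [mem_Icc] at hk; simp only [mem_range]; omega
  · intro j hj; simp only [mem_range] at hj; simp only [mem_Icc]; omega
  · intro k hk; simp only [mem_Icc] at hk; show m - (m - k) = k; omega
  · intro j hj; simp only [mem_range] at hj; show m - (m - j) = j; omega
  · intro k hk
    simp only [mem_Icc] at hk
    obtain ⟨b, rfl⟩ : ∃ b, k = b + 1 := ⟨k - 1, by omega⟩
    obtain ⟨a, ha⟩ : ∃ a, m = a + b + 1 := ⟨m - (b + 1), by omega⟩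
    subst ha
    rw [show 2 * (a + b + 1) - 2 * (b + 1) = 2 * a by omega,
      show (a + b + 1) - (b + 1) = a by omega,
      show (a + b + 1) + (b + 1) = a + 2 * b + 2 by omega,
      show (a + b + 1) - 1 = a + b by omega,
      Nat.choose_one_right, Nat.factorial_one]
    have h := term_eq a b
    push_cast at h ⊢
    linear_combination h

open Nat in
/-- divisibility of the non-top terms -/
lemma dvd_T (j k : ℕ) :
    2 ^ (padicValNat 2 ((j + k + 2) * (j + k + 3)) + 1) ∣ Tm (j + k + 2) j := by
  set m := j + k + 2 with hm
  have hm1 : m + 1 = j + k + 3 := by omega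
  rw [show j + k + 3 = m + 1 from hm1.symm]
  set v := padicValNat 2 (m * (m + 1)) with hv
  have hvd : (2 : ℕ) ^ v ∣ m * (m + 1) := pow_padicValNat_dvd
  have hdesc : (m + 1).descFactorial (m + 1 - j)
      = (m + 1) * (m * ((j + k + 1).descFactorial (k + 1))) := by
    rw [show m + 1 - j = (k + 1) + 2 by omega,
      show m + 1 = ((j + k + 1) + 1) + 1 by omega,
      Nat.succ_descFactorial_succ, Nat.succ_descFactorial_succ]
  have hTw : Tm m j = (m * (m + 1)) *
      (((2 * m - j).choose (m + 1)) * ((j + k + 1).descFactorial (k + 1))) * ((2 * j - 1)‼) := by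
    unfold Tm
    rw [hdesc]; ring
  have h2 : 2 ∣ ((2 * m - j).choose (m + 1)) * ((j + k + 1).descFactorial (k + 1)) := by
    rcases Nat.eq_zero_or_pos k with hk0 | hkpos
    · subst hk0
      rw [show 2 * m - j = (j + 3) + 1 by omega, show m + 1 = j + 3 by omega,
        Nat.choose_succ_self_right, show j + 0 + 1 = j + 1 by omega, Nat.descFactorial_one]
      rcases Nat.even_or_odd j with ⟨c, hc⟩ | ⟨c, hc⟩
      · exact ⟨(c + 2) * (j + 1), by subst hc; ring⟩
      · exact ⟨(j + 3 + 1) * (c + 1), by subst hc; ring⟩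
    · have h2f : 2 ∣ (k + 1)! := Nat.dvd_factorial (by norm_num) (by omega)
      exact Dvd.dvd.mul_left
        (h2f.trans (Nat.factorial_dvd_descFactorial (j + k + 1) (k + 1))) _
  rw [hTw, pow_succ]
  exact Dvd.dvd.mul_right (mul_dvd_mul hvd h2) _

theorem val_A_one (m : ℕ) (h : 1 ≤ m) :
    padicValRat 2 (A 1 m) = (padicValNat 2 (m * (m + 1)) : ℤ) + 1 := by
  haveI : Fact (Nat.Prime 2) := ⟨Nat.prime_two⟩
  obtain ⟨n, rfl⟩ : ∃ n, m = n + 1 := ⟨m - 1, by omega⟩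
  set m := n + 1 with hm
  set v := padicValNat 2 (m * (m + 1)) with hv
  have hS : ∑ j ∈ range m, Tm m j = (∑ j ∈ range n, Tm m j) + Tm m n :=
    Finset.sum_range_succ _ n
  have htop : Tm m n = ((2 * n - 1).doubleFactorial) * ((m + 1) * m) := by
    unfold Tm
    rw [show 2 * m - n = m + 1 by omega, show m + 1 - n = 2 by omega, Nat.choose_self,
      show (2 : ℕ) = 1 + 1 from rfl, Nat.succ_descFactorial_succ, Nat.descFactorial_one]
    ring
  obtain ⟨c, hc⟩ : (2:ℕ) ^ v ∣ m * (m + 1) := pow_padicValNat_dvd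
  have hcodd : ¬ 2 ∣ c := by
    intro hdc
    obtain ⟨d, hd⟩ := hdc
    have : (2:ℕ) ^ (v + 1) ∣ m * (m + 1) := ⟨d, by rw [hc, hd, pow_succ]; ring⟩
    exact (pow_succ_padicValNat_not_dvd (p := 2) (by positivity)) this
  have hrest : (2:ℕ) ^ (v + 1) ∣ ∑ j ∈ range n, Tm m j := by
    refine Finset.dvd_sum ?_
    intro j hj
    simp only [mem_range] at hj
    obtain ⟨k, hk⟩ : ∃ k, m = j + k + 2 := ⟨n - 1 - j, by omega⟩
    have hd := dvd_T j k
    rw [show j + k + 2 = m from hk.symm, show j + k + 3 = m + 1 by omega] at hd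
    exact hd
  obtain ⟨w, hw⟩ := hrest
  set q := (2 * n - 1).doubleFactorial with hq
  have hqodd : ¬ 2 ∣ q := odd_df n
  have hsum : ∑ j ∈ range m, Tm m j = 2 ^ v * (2 * w + q * c) := by
    rw [hS, hw, htop]
    have hmc : (m + 1) * m = 2 ^ v * c := by rw [← hc]; ring
    rw [hmc, pow_succ]
    ring
  have hodd2 : ¬ 2 ∣ (2 * w + q * c) := by
    intro hd
    have : 2 ∣ q * c := by omega
    rcases (Nat.Prime.dvd_mul Nat.prime_two).1 this with h1 | h2
    · exact hqodd h1
    · exact hcodd h2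
  have hne : 2 * w + q * c ≠ 0 := by
    intro h0; exact hodd2 (by omega)
  rw [A_eq m (by omega)]
  rw [padicValRat.of_nat]
  have h2S : 2 * ∑ j ∈ range m, Tm m j = 2 ^ (v + 1) * (2 * w + q * c) := by
    rw [hsum, pow_succ]; ring
  rw [h2S]
  rw [padicValNat.mul (by positivity) hne, padicValNat.prime_pow,
    padicValNat.eq_zero_of_not_dvd hodd2]
  push_cast
  ring
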